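/- arXiv:2307.05630 — 2 statements merged into one kernel-verified Lean document; each statement's English description precedes it below -/
import Mathlib

section
/- Let X be a metrizable space and Y a metrizable Souslin space (each with its Borel σ-algebra), let B_X ⊆ Σ_X and B_Y ⊆ Σ_Y be countable families of conditioning events, and let f: X → Y be a Borel measurable function with f⁻¹(B_Y) = B_X. Then the pushforward-CPS map L̄_f: Δ^{B_X}(X) → Δ^{B_Y}(Y), defined by L̄_f(μ)(E|B) := μ(f⁻¹(E) | f⁻¹(B)), is Borel measurable (with respect to the topologies these CPS spaces inherit as subspaces of Δ(X)^{B_X} and Δ(Y)^{B_Y}). -/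
open MeasureTheory Set

noncomputable section

/-- A family of conditioning events: a nonempty family of measurable sets not containing `∅`. -/
def IsCondFamily {X : Type*} [MeasurableSpace X] (B : Set (Set X)) : Prop :=
  B.Nonempty ∧ ∅ ∉ B ∧ ∀ b ∈ B, MeasurableSet b

/-- The defining conditions of a conditional probability system (CPS) on `(X, Σ_X, B)`:
`μ(B|B) = 1`, and the chain rule `μ(A|B)·μ(B|C) = μ(A|C)` whenever `A ⊆ B ⊆ C`. -/
def IsCPS {X : Type*} [MeasurableSpace X] (B : Set (Set X))
    (μ : B → ProbabilityMeasure X) : Prop :=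
  (∀ b : B, (μ b : Measure X) (b : Set X) = 1) ∧
  ∀ (A : Set X), MeasurableSet A → ∀ b c : B, A ⊆ (b : Set X) → (b : Set X) ⊆ (c : Set X) →
    (μ b : Measure X) A * (μ c : Measure X) (b : Set X) = (μ c : Measure X) A

/-- The space `Δ^B(X)` of conditional probability systems on `(X, Σ_X, B)`,
viewed as a subset of `Δ(X)^B`. -/
def CPSs (X : Type*) [MeasurableSpace X] (B : Set (Set X)) : Type _ :=
  {μ : B → ProbabilityMeasure X // IsCPS B μ}

/-- `Δ^B(X)` carries the subspace topology inherited from the product `Δ(X)^B`,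
where `Δ(X)` has the topology of weak convergence. -/
instance (X : Type*) [MeasurableSpace X] [TopologicalSpace X] [OpensMeasurableSpace X]
    (B : Set (Set X)) : TopologicalSpace (CPSs X B) :=
  inferInstanceAs (TopologicalSpace {μ : B → ProbabilityMeasure X // IsCPS B μ})

/-- A Souslin space: the image of a complete, separable metric space under a
continuous surjection. -/
def IsSouslin (X : Type*) [TopologicalSpace X] : Prop :=
  ∃ (Z : Type) (m : MetricSpace Z),
    letI := m
    CompleteSpace Z ∧ TopologicalSpace.SeparableSpace Z ∧
      ∃ f : Z → X, Continuous f ∧ Function.Surjective f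

/-- A Lusin space: the image of a complete, separable metric space under a
continuous bijection. -/
def IsLusin (X : Type*) [TopologicalSpace X] : Prop :=
  ∃ (Z : Type) (m : MetricSpace Z),
    letI := m
    CompleteSpace Z ∧ TopologicalSpace.SeparableSpace Z ∧
      ∃ f : Z → X, Continuous f ∧ Function.Bijective f

/-- The array of image measures defining the pushforward-CPS map `L̄_f`:
`L̄_f(μ)(E|B) = μ(f⁻¹(E)|f⁻¹(B))`. -/
def pushArray {X Y : Type*} [MeasurableSpace X] [MeasurableSpace Y]
    {BX : Set (Set X)} {BY : Set (Set Y)} (f : X → Y) (hf : Measurable f)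
    (hB : BX = (fun E => f ⁻¹' E) '' BY) (μ : BX → ProbabilityMeasure X) :
    BY → ProbabilityMeasure Y :=
  fun b =>
    ⟨((μ ⟨f ⁻¹' (b : Set Y), by rw [hB]; exact mem_image_of_mem _ b.2⟩ : ProbabilityMeasure X) :
        Measure X).map f,
      Measure.isProbabilityMeasure_map hf.aemeasurable⟩

/-- The pushforward-CPS map is well defined: it maps CPSs to CPSs. -/
theorem isCPS_pushArray {X Y : Type*} [MeasurableSpace X] [MeasurableSpace Y]
    {BX : Set (Set X)} {BY : Set (Set Y)} (f : X → Y) (hf : Measurable f)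
    (hBY : ∀ b ∈ BY, MeasurableSet b) (hB : BX = (fun E => f ⁻¹' E) '' BY)
    {μ : BX → ProbabilityMeasure X} (hμ : IsCPS BX μ) : IsCPS BY (pushArray f hf hB μ) := by
  constructor
  · intro b
    show (Measure.map f _) (b : Set Y) = 1
    rw [Measure.map_apply hf (hBY b b.2)]
    exact hμ.1 ⟨f ⁻¹' (b : Set Y), by rw [hB]; exact mem_image_of_mem _ b.2⟩
  · intro A hA b c hAb hbc
    show (Measure.map f _) A * (Measure.map f _) (b : Set Y) = (Measure.map f _) A
    rw [Measure.map_apply hf hA, Measure.map_apply hf (hBY b b.2), Measure.map_apply hf hA]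
    exact hμ.2 (f ⁻¹' A) (hf hA) _ _ (preimage_mono hAb) (preimage_mono hbc)

/-- The pushforward-CPS map `L̄_f : Δ^{B_X}(X) → Δ^{B_Y}(Y)`. -/
def pushCPS {X Y : Type*} [MeasurableSpace X] [MeasurableSpace Y]
    {BX : Set (Set X)} {BY : Set (Set Y)} (f : X → Y) (hf : Measurable f)
    (hBY : ∀ b ∈ BY, MeasurableSet b) (hB : BX = (fun E => f ⁻¹' E) '' BY)
    (μ : CPSs X BX) : CPSs Y BY :=
  ⟨pushArray f hf hB μ.1, isCPS_pushArray f hf hBY hB μ.2⟩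

/- ## Auxiliary material for the proof -/

section Auxiliary

open Filter Topology TopologicalSpace BoundedContinuousFunction
open scoped ENNReal NNReal

/-- Measurability into a `comap` σ-algebra. -/
theorem cpsAux_measurable_comap_mk {α γ β : Type*} {ma : MeasurableSpace α}
    {mb : MeasurableSpace β} (g : γ → β) {f : α → γ}
    (h : @Measurable α β ma mb fun a => g (f a)) :
    @Measurable α γ ma (mb.comap g) f := fun _s hs => by
  obtain ⟨t, ht, rfl⟩ := hs
  exact h ht

/-- A continuous map is measurable for the Borel σ-algebras. -/
theorem cpsAux_continuous_measurable_borel {α β : Type*} [TopologicalSpace α]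
    [TopologicalSpace β] {f : α → β} (h : Continuous f) :
    @Measurable α β (borel α) (borel β) f := by
  letI m1 : MeasurableSpace α := borel α
  letI m2 : MeasurableSpace β := borel β
  haveI : BorelSpace α := ⟨rfl⟩
  haveI : BorelSpace β := ⟨rfl⟩
  exact h.measurable

theorem cpsAux_measurable_pi {α δ : Type*} {π : δ → Type*} {ma : MeasurableSpace α}
    [m : ∀ a, MeasurableSpace (π a)] {f : α → ∀ a, π a}
    (hf : ∀ a, @Measurable _ _ ma (m a) fun c => f c a) :
    @Measurable _ _ ma MeasurableSpace.pi f := by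
  letI := ma
  exact measurable_pi_lambda f hf

/-- The Giry-type σ-algebra on probability measures (generated by evaluations). -/
def pmGiry (Ω : Type*) [MeasurableSpace Ω] : MeasurableSpace (ProbabilityMeasure Ω) :=
  MeasurableSpace.comap (fun ν => (ν : Measure Ω)) inferInstance

/-- Integration of a fixed bounded continuous function is continuous in the measure, for the
topology of convergence in distribution. -/
theorem cpsAux_continuous_lintegralPM {Ω : Type*} [TopologicalSpace Ω] [MeasurableSpace Ω]
    [OpensMeasurableSpace Ω] (f : Ω →ᵇ ℝ≥0) :
    Continuous fun ν : ProbabilityMeasure Ω => ∫⁻ x, (f x : ℝ≥0∞) ∂(ν : Measure Ω) := by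
  rw [continuous_iff_continuousAt]
  intro ν
  exact ProbabilityMeasure.tendsto_iff_forall_lintegral_tendsto.mp tendsto_id f

/-- Evaluation at a measurable set is measurable with respect to the Borel σ-algebra of the
topology of convergence in distribution, on a pseudo-metrizable space. -/
theorem cpsAux_measurable_coe_PM {Ω : Type*} [TopologicalSpace Ω] [MeasurableSpace Ω]
    [BorelSpace Ω] [PseudoMetrizableSpace Ω] :
    ∀ ⦃E : Set Ω⦄, MeasurableSet E →
      @Measurable (ProbabilityMeasure Ω) ℝ≥0∞ (borel _) _ fun ν => (ν : Measure Ω) E := by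
  have h_eq : ‹MeasurableSpace Ω› = MeasurableSpace.generateFrom {s : Set Ω | IsClosed s} := by
    rw [BorelSpace.measurable_eq (α := Ω), borel_eq_generateFrom_isClosed]
  refine MeasurableSpace.induction_on_inter h_eq isPiSystem_isClosed ?_ ?_ ?_ ?_
  · simp only [measure_empty]
    exact measurable_const
  · intro F hF
    replace hF : IsClosed F := hF
    have key : (fun ν : ProbabilityMeasure Ω => (ν : Measure Ω) F) =
        fun ν : ProbabilityMeasure Ω =>
          liminf (fun n => ∫⁻ x, (hF.apprSeq n x : ℝ≥0∞) ∂(ν : Measure Ω)) atTop := by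
      funext ν
      exact ((HasOuterApproxClosed.tendsto_lintegral_apprSeq hF (ν : Measure Ω)).liminf_eq).symm
    rw [key]
    letI : MeasurableSpace (ProbabilityMeasure Ω) := borel _
    haveI : OpensMeasurableSpace (ProbabilityMeasure Ω) := ⟨le_rfl⟩
    exact Measurable.liminf fun n => (cpsAux_continuous_lintegralPM (hF.apprSeq n)).measurable
  · intro t ht hC
    have key : (fun ν : ProbabilityMeasure Ω => (ν : Measure Ω) tᶜ) =
        fun ν : ProbabilityMeasure Ω => 1 - (ν : Measure Ω) t := by
      funext ν
      rw [measure_compl ht (measure_ne_top _ _), measure_univ]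
    rw [key]
    exact measurable_const.sub hC
  · intro g hdis hmeas hC
    simp only [measure_iUnion hdis hmeas]
    exact Measurable.ennreal_tsum hC

theorem cpsAux_measurable_toMeasure_PM {Ω : Type*} [TopologicalSpace Ω] [MeasurableSpace Ω]
    [BorelSpace Ω] [PseudoMetrizableSpace Ω] :
    @Measurable (ProbabilityMeasure Ω) (Measure Ω) (borel _) _ fun ν => (ν : Measure Ω) := by
  letI : MeasurableSpace (ProbabilityMeasure Ω) := borel _
  exact Measure.measurable_of_measurable_coe _ fun s hs => cpsAux_measurable_coe_PM hs

theorem pmGiry_le_borel {Ω : Type*} [TopologicalSpace Ω] [MeasurableSpace Ω]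
    [BorelSpace Ω] [PseudoMetrizableSpace Ω] :
    pmGiry Ω ≤ borel (ProbabilityMeasure Ω) :=
  Measurable.comap_le cpsAux_measurable_toMeasure_PM

section YSide

/-- The scales used for the countable family of test functions. -/
def cpsRR (k : ℕ) : ℝ := (1 / 2 : ℝ) ^ k

theorem cpsRR_pos (k : ℕ) : 0 < cpsRR k := by
  unfold cpsRR; positivity

theorem cpsRR_anti {k m : ℕ} (h : k ≤ m) : cpsRR m ≤ cpsRR k :=
  pow_le_pow_of_le_one (by norm_num) (by norm_num) h

variable (Ω : Type*) [PseudoMetricSpace Ω] [SeparableSpace Ω] [Nonempty Ω]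

/-- Countable family of closed balls. -/
def cpsCC (p : ℕ × ℕ) : Set Ω := Metric.closedBall (denseSeq Ω p.1) (cpsRR p.2)

/-- Countable family of (doubled) open balls. -/
def cpsBB (p : ℕ × ℕ) : Set Ω := Metric.ball (denseSeq Ω p.1) (2 * cpsRR p.2)

/-- The countable family of test functions. -/
def cpsGG (j : Finset (ℕ × ℕ) × ℕ) : Ω →ᵇ ℝ≥0 :=
  thickenedIndicator (cpsRR_pos j.2) (⋃ p ∈ j.1, cpsCC Ω p)

variable [MeasurableSpace Ω]

/-- The countable array of test integrals. -/
def cpsPhi (ν : ProbabilityMeasure Ω) (j : Finset (ℕ × ℕ) × ℕ) : ℝ≥0∞ :=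
  ∫⁻ x, (cpsGG Ω j x : ℝ≥0∞) ∂(ν : Measure Ω)

variable [OpensMeasurableSpace Ω]

theorem cpsAux_continuous_Phi : Continuous (cpsPhi Ω) :=
  continuous_pi fun j => cpsAux_continuous_lintegralPM (cpsGG Ω j)

theorem cpsAux_measurable_Phi : @Measurable _ _ (pmGiry Ω) _ (cpsPhi Ω) := by
  letI : MeasurableSpace (ProbabilityMeasure Ω) := pmGiry Ω
  refine measurable_pi_lambda _ fun j => ?_
  have h1 : Measurable fun ν : ProbabilityMeasure Ω => (ν : Measure Ω) :=
    Measurable.of_comap_le le_rfl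
  exact (Measure.measurable_lintegral
    ((cpsGG Ω j).continuous.measurable.coe_nnreal_ennreal)).comp h1

theorem cpsAux_measure_le_Phi (ν : ProbabilityMeasure Ω) (S : Finset (ℕ × ℕ)) (m : ℕ) :
    (ν : Measure Ω) (⋃ p ∈ S, cpsCC Ω p) ≤ cpsPhi Ω ν (S, m) := by
  have hUc : IsClosed (⋃ p ∈ (S : Set (ℕ × ℕ)), cpsCC Ω p) :=
    S.finite_toSet.isClosed_biUnion fun p _ => Metric.isClosed_closedBall
  have hU : MeasurableSet (⋃ p ∈ S, cpsCC Ω p) := hUc.measurableSet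
  rw [show ((ν : Measure Ω) (⋃ p ∈ S, cpsCC Ω p)) =
      ∫⁻ x, (⋃ p ∈ S, cpsCC Ω p).indicator (fun _ => (1 : ℝ≥0∞)) x ∂(ν : Measure Ω) from
      (MeasureTheory.lintegral_indicator_one hU).symm]
  refine lintegral_mono fun x => ?_
  by_cases hx : x ∈ ⋃ p ∈ S, cpsCC Ω p
  · rw [Set.indicator_of_mem hx]
    have h1 : (1 : ℝ≥0) ≤ cpsGG Ω (S, m) x :=
      one_le_thickenedIndicator_apply Ω (cpsRR_pos m) hx
    exact ENNReal.one_le_coe_iff.mpr h1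
  · rw [Set.indicator_of_notMem hx]
    exact zero_le

theorem cpsAux_Phi_le_measure (ν : ProbabilityMeasure Ω) (S : Finset (ℕ × ℕ)) (m : ℕ)
    (hm : ∀ p ∈ S, p.2 ≤ m) {G : Set Ω} (hG : MeasurableSet G)
    (hsub : ∀ p ∈ S, cpsBB Ω p ⊆ G) :
    cpsPhi Ω ν (S, m) ≤ (ν : Measure Ω) G := by
  rw [show ((ν : Measure Ω) G) =
      ∫⁻ x, G.indicator (fun _ => (1 : ℝ≥0∞)) x ∂(ν : Measure Ω) from
      (MeasureTheory.lintegral_indicator_one hG).symm]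
  refine lintegral_mono fun x => ?_
  by_cases hx : x ∈ G
  · rw [Set.indicator_of_mem hx]
    have h1 : cpsGG Ω (S, m) x ≤ 1 := thickenedIndicator_le_one _ _ x
    exact ENNReal.coe_le_one_iff.mpr h1
  · have hx0 : cpsGG Ω (S, m) x = 0 := by
      apply thickenedIndicator_zero
      intro hmem
      rw [Metric.mem_thickening_iff] at hmem
      obtain ⟨z, hz, hdist⟩ := hmem
      simp only [Set.mem_iUnion] at hz
      obtain ⟨p, hpS, hzp⟩ := hz
      apply hx
      apply hsub p hpS
      have h1 : dist z (denseSeq Ω p.1) ≤ cpsRR p.2 := Metric.mem_closedBall.mp hzp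
      have h2 : cpsRR m ≤ cpsRR p.2 := cpsRR_anti (hm p hpS)
      have h3 : dist x (denseSeq Ω p.1) ≤ dist x z + dist z (denseSeq Ω p.1) :=
        dist_triangle _ _ _
      refine Metric.mem_ball.mpr ?_
      have : dist x z < cpsRR m := hdist
      show dist x (denseSeq Ω p.1) < 2 * cpsRR p.2
      nlinarith [cpsRR_pos p.2]
    simp [hx0]

/-- The core portmanteau argument: convergence of the countable family of test integrals implies
convergence in distribution. -/
theorem cpsAux_tendsto_of_Phi_tendsto (ν : ProbabilityMeasure Ω) (νs : ℕ → ProbabilityMeasure Ω)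
    (h : ∀ j, Tendsto (fun n => cpsPhi Ω (νs n) j) atTop (𝓝 (cpsPhi Ω ν j))) :
    Tendsto νs atTop (𝓝 ν) := by
  classical
  apply MeasureTheory.tendsto_of_forall_isOpen_le_liminf
  intro G hG
  have key : (ν : Measure Ω) G ≤ liminf (fun n => (νs n : Measure Ω) G) atTop := by
    set A : Set (ℕ × ℕ) := {p | cpsBB Ω p ⊆ G} with hA
    set u : Finset (ℕ × ℕ) → Set Ω := fun S => ⋃ p ∈ S.filter (· ∈ A), cpsCC Ω p with hu
    have hGsub : G ⊆ ⋃ S : Finset (ℕ × ℕ), u S := by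
      intro y hy
      obtain ⟨ε, hε, hball⟩ := Metric.isOpen_iff.mp hG y hy
      obtain ⟨k, hk⟩ := exists_pow_lt_of_lt_one (show (0 : ℝ) < ε / 3 by linarith)
        (show (1 / 2 : ℝ) < 1 by norm_num)
      have hrk : cpsRR k < ε / 3 := hk
      obtain ⟨i, hi⟩ := Metric.denseRange_iff.mp (denseRange_denseSeq Ω) y (cpsRR k)
        (cpsRR_pos k)
      have hpA : (i, k) ∈ A := by
        intro z hz
        apply hball
        have hz' : dist z (denseSeq Ω i) < 2 * cpsRR k := Metric.mem_ball.mp hz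
        have ht : dist z y ≤ dist z (denseSeq Ω i) + dist (denseSeq Ω i) y :=
          dist_triangle _ _ _
        have h2 : dist (denseSeq Ω i) y < cpsRR k := by rw [dist_comm]; exact hi
        refine Metric.mem_ball.mpr ?_
        show dist z y < ε
        linarith
      refine Set.mem_iUnion.mpr ⟨{(i, k)}, ?_⟩
      have hyC : y ∈ cpsCC Ω (i, k) := Metric.mem_closedBall.mpr (le_of_lt hi)
      simp only [hu, Finset.filter_singleton, if_pos hpA, Set.mem_iUnion]
      exact ⟨(i, k), Finset.mem_singleton_self _, hyC⟩
    have hmono : Monotone u := by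
      intro S T hST
      exact Set.biUnion_subset_biUnion_left (Finset.filter_subset_filter _ hST)
    have hdir : Directed (· ⊆ ·) u := hmono.directed_le
    calc (ν : Measure Ω) G ≤ (ν : Measure Ω) (⋃ S : Finset (ℕ × ℕ), u S) :=
          measure_mono hGsub
      _ = ⨆ S : Finset (ℕ × ℕ), (ν : Measure Ω) (u S) := hdir.measure_iUnion
      _ ≤ liminf (fun n => (νs n : Measure Ω) G) atTop := by
          refine iSup_le fun S => ?_
          set S' := S.filter (· ∈ A) with hS'
          have hsub : ∀ p ∈ S', cpsBB Ω p ⊆ G := fun p hp => (Finset.mem_filter.mp hp).2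
          set m := S'.sup Prod.snd with hm'
          have hm : ∀ p ∈ S', p.2 ≤ m := fun p hp => Finset.le_sup (f := Prod.snd) hp
          calc (ν : Measure Ω) (u S) ≤ cpsPhi Ω ν (S', m) := cpsAux_measure_le_Phi Ω ν S' m
            _ = liminf (fun n => cpsPhi Ω (νs n) (S', m)) atTop := ((h (S', m)).liminf_eq).symm
            _ ≤ liminf (fun n => (νs n : Measure Ω) G) atTop := by
                refine liminf_le_liminf (Eventually.of_forall fun n => ?_)
                exact cpsAux_Phi_le_measure Ω (νs n) S' m hm hG.measurableSet hsub
  have bound : ∀ n, νs n G ≤ 1 := fun n => (νs n).apply_le_one G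
  have aux : (↑(liminf (fun n => νs n G) atTop) : ℝ≥0∞) =
      liminf (fun n => ((νs n G : ℝ≥0) : ℝ≥0∞)) atTop := by
    refine Monotone.map_liminf_of_continuousAt (F := atTop) ENNReal.coe_mono (fun n => νs n G)
      ENNReal.continuous_coe.continuousAt ?_ ?_
    · exact IsBoundedUnder.isCoboundedUnder_ge ⟨1, by
        simpa using Eventually.of_forall bound⟩
    · exact ⟨0, by simp⟩
  rw [← ENNReal.coe_le_coe, aux]
  simpa only [ProbabilityMeasure.ennreal_coeFn_eq_coeFn_toMeasure] using key

/-- Type synonym: probability measures with the topology induced by the test integrals. -/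
def PMind : Type _ := ProbabilityMeasure Ω

instance : TopologicalSpace (PMind Ω) := TopologicalSpace.induced (cpsPhi Ω) inferInstance

instance : SecondCountableTopology (PMind Ω) :=
  secondCountableTopology_induced _ _ _

/-- The topology of convergence in distribution coincides with the topology induced by the
countable family of test integrals. -/
theorem cpsAux_top_eq :
    (ProbabilityMeasure.instTopologicalSpace : TopologicalSpace (ProbabilityMeasure Ω)) =
      TopologicalSpace.induced (cpsPhi Ω) inferInstance := by
  refine le_antisymm (continuous_iff_le_induced.mp (cpsAux_continuous_Phi Ω)) ?_
  have hcont : Continuous (fun ν : PMind Ω => show ProbabilityMeasure Ω from ν) := by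
    apply SeqContinuous.continuous
    intro νs ν hνs
    have h2 : (𝓝 ν : Filter (PMind Ω)) = Filter.comap (cpsPhi Ω) (𝓝 (cpsPhi Ω ν)) :=
      nhds_induced _ _
    rw [h2] at hνs
    have h3 : Tendsto (fun n => cpsPhi Ω (νs n)) atTop (𝓝 (cpsPhi Ω ν)) :=
      tendsto_comap_iff.mp hνs
    exact cpsAux_tendsto_of_Phi_tendsto Ω ν (fun n => νs n)
      (fun j => tendsto_pi_nhds.mp h3 j)
  rw [TopologicalSpace.le_def]
  intro U hU
  exact hcont.isOpen_preimage U hU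

theorem cpsAux_secondCountable_PM : SecondCountableTopology (ProbabilityMeasure Ω) := by
  rw [cpsAux_top_eq Ω]
  exact secondCountableTopology_induced _ _ _

theorem cpsAux_borel_PM_le_pmGiry : borel (ProbabilityMeasure Ω) ≤ pmGiry Ω := by
  have e : borel (ProbabilityMeasure Ω) =
      @borel (ProbabilityMeasure Ω) (TopologicalSpace.induced (cpsPhi Ω) inferInstance) := by
    rw [cpsAux_top_eq Ω]
  rw [e, borel_comap]
  rw [show borel ((Finset (ℕ × ℕ) × ℕ) → ℝ≥0∞) =
      (MeasurableSpace.pi : MeasurableSpace ((Finset (ℕ × ℕ) × ℕ) → ℝ≥0∞)) from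
      (BorelSpace.measurable_eq).symm]
  exact Measurable.comap_le (cpsAux_measurable_Phi Ω)

end YSide

end Auxiliary

/-- Lemma 2(ii), measurable case: if `X` is metrizable, `Y` is a metrizable Souslin space,
`B_X`, `B_Y` are countable families of conditioning events and `f : X → Y` is Borel measurable
with `f⁻¹(B_Y) = B_X`, then the pushforward-CPS map `L̄_f : Δ^{B_X}(X) → Δ^{B_Y}(Y)` is
Borel measurable. -/
theorem pushCPS_measurable {X Y : Type*}
    [TopologicalSpace X] [MeasurableSpace X] [BorelSpace X] [TopologicalSpace.MetrizableSpace X]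
    [TopologicalSpace Y] [MeasurableSpace Y] [BorelSpace Y] [TopologicalSpace.MetrizableSpace Y]
    (hY : IsSouslin Y)
    {BX : Set (Set X)} {BY : Set (Set Y)} (hBX : IsCondFamily BX) (hBY : IsCondFamily BY)
    (hBXc : BX.Countable) (hBYc : BY.Countable)
    (f : X → Y) (hf : Measurable f) (hB : BX = (fun E => f ⁻¹' E) '' BY) :
    @Measurable (CPSs X BX) (CPSs Y BY) (borel _) (borel _)
      (pushCPS f hf hBY.2.2 hB) := by
  classical
  -- `Y` is separable and nonempty
  obtain ⟨Z, mZ, hZ⟩ := hY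
  obtain ⟨-, hsepZ, gZ, hgc, hgs⟩ := hZ
  letI := mZ
  haveI := hsepZ
  haveI hsepY : TopologicalSpace.SeparableSpace Y := hgs.denseRange.separableSpace hgc
  haveI hYne : Nonempty Y := by
    obtain ⟨b, hb⟩ := hBY.1
    rcases Set.eq_empty_or_nonempty b with h | h
    · exact absurd (h ▸ hb) hBY.2.1
    · exact ⟨h.some⟩
  letI : PseudoMetricSpace Y := TopologicalSpace.pseudoMetrizableSpacePseudoMetric Y
  letI : MeasurableSpace (ProbabilityMeasure X) := pmGiry X
  letI : MeasurableSpace (ProbabilityMeasure Y) := pmGiry Y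
  haveI : SecondCountableTopology (ProbabilityMeasure Y) := cpsAux_secondCountable_PM Y
  haveI : BorelSpace (ProbabilityMeasure Y) :=
    ⟨le_antisymm pmGiry_le_borel (cpsAux_borel_PM_le_pmGiry Y)⟩
  haveI : Countable ↥BY := hBYc.to_subtype
  -- reduce the codomain σ-algebra
  have hcod : borel (CPSs Y BY) ≤
      MeasurableSpace.comap (fun μ : CPSs Y BY => (μ.1 : ↥BY → ProbabilityMeasure Y))
        MeasurableSpace.pi := by
    rw [show (MeasurableSpace.pi : MeasurableSpace (↥BY → ProbabilityMeasure Y)) =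
        borel (↥BY → ProbabilityMeasure Y) from BorelSpace.measurable_eq]
    exact le_of_eq borel_comap
  refine Measurable.mono ?_ le_rfl hcod
  refine cpsAux_measurable_comap_mk _ ?_
  refine cpsAux_measurable_pi fun b => ?_
  -- the coordinate map at `b` is measurable
  have c1 : @Measurable (CPSs X BX) (ProbabilityMeasure X) (borel _) (borel _)
      (fun μ => μ.1 ⟨f ⁻¹' (b : Set Y), by rw [hB]; exact mem_image_of_mem _ b.2⟩) :=
    cpsAux_continuous_measurable_borel ((continuous_apply _).comp continuous_subtype_val)
  have c2 : @Measurable (CPSs X BX) (Measure Y) (borel _) _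
      (fun μ => ((μ.1 ⟨f ⁻¹' (b : Set Y), by rw [hB]; exact mem_image_of_mem _ b.2⟩ :
          ProbabilityMeasure X) : Measure X).map f) :=
    (Measure.measurable_map f hf).comp (cpsAux_measurable_toMeasure_PM.comp c1)
  exact cpsAux_measurable_comap_mk _ c2

end
end

section
/- Let X, Y, Z be metrizable Souslin spaces, let B ⊆ Σ_X be a countable family of conditioning events, let f₁: Y → Z be a Borel measurable surjection, and define f₂: X × Y → X × Z by f₂ := (Id_X, f₁). Then the pushforward-CPS map L̄_{f₂}: Δ^B(X × Y) → Δ^B(X × Z) is surjective: for every conditional probability system ν on X × Z (with conditioning events the cylinders B × Z, B ∈ B) there exists a conditional probability system μ on X × Y (with conditioning events the cylinders B × Y, B ∈ B) such that L̄_{f₂}(μ) = ν. -/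
open MeasureTheory Set

noncomputable section

/-- Given a family `B` of subsets of `X`, the family of conditioning events of `X × Y`:
all cylinders `b ×ˢ univ` with `b ∈ B`. -/
def cylFam {X : Type*} (B : Set (Set X)) (Y : Type*) : Set (Set (X × Y)) :=
  (fun b => b ×ˢ (Set.univ : Set Y)) '' B

namespace CPSAux

/-- Cylinder in `ℕ → ℕ` given by a word (stored in reverse: newest digit at the head). -/
def cyl (w : List ℕ) : Set (ℕ → ℕ) := {β | ∀ k < w.length, β k = w.reverse.getD k 0}

lemma cyl_nil : cyl ([] : List ℕ) = univ := by
  ext β; simp [cyl]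

lemma cyl_cons (i : ℕ) (w : List ℕ) :
    cyl (i :: w) = cyl w ∩ {β | β w.length = i} := by
  ext β
  simp only [cyl, List.length_cons, List.reverse_cons, mem_inter_iff, mem_setOf_eq]
  constructor
  · intro h
    refine ⟨fun k hk => ?_, ?_⟩
    · have := h k (by omega)
      rwa [List.getD_append _ _ _ _ (by simpa using hk)] at this
    · have := h w.length (by omega)
      rwa [List.getD_append_right _ _ _ _ (by simp), List.length_reverse, Nat.sub_self] at this
  · rintro ⟨h1, h2⟩ k hk
    rcases Nat.lt_or_ge k w.length with hk' | hk'
    · rw [List.getD_append _ _ _ _ (by simpa using hk')]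
      exact h1 k hk'
    · have hkeq : k = w.length := by omega
      subst hkeq
      rw [List.getD_append_right _ _ _ _ (by simp), List.length_reverse, Nat.sub_self]
      simpa using h2

lemma cyl_eq_iUnion (w : List ℕ) : cyl w = ⋃ i, cyl (i :: w) := by
  apply subset_antisymm
  · intro β hβ
    exact mem_iUnion.2 ⟨β w.length, by rw [cyl_cons]; exact ⟨hβ, rfl⟩⟩
  · intro β hβ
    rcases mem_iUnion.1 hβ with ⟨i, hi⟩
    rw [cyl_cons] at hi
    exact hi.1

variable {V : Type*} [MeasurableSpace V]

/-- The recursive partition of `V` along words, via Borel hulls of images of cylinders. -/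
def Eset (q : (ℕ → ℕ) → V) (ρ : Measure V) : List ℕ → Set V
  | [] => univ
  | i :: w =>
      Eset q ρ w ∩
        (toMeasurable (ρ.restrict (Eset q ρ w)) (q '' cyl (i :: w)) \
          ⋃ j, ⋃ _ : j < i, toMeasurable (ρ.restrict (Eset q ρ w)) (q '' cyl (j :: w)))

variable (q : (ℕ → ℕ) → V) (ρ : Measure V)

lemma measurableSet_Eset : ∀ w : List ℕ, MeasurableSet (Eset q ρ w)
  | [] => MeasurableSet.univ
  | i :: w =>
      (measurableSet_Eset w).inter
        ((measurableSet_toMeasurable _ _).diff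
          (MeasurableSet.iUnion fun _ => MeasurableSet.iUnion fun _ =>
            measurableSet_toMeasurable _ _))

lemma Eset_cons_subset (i : ℕ) (w : List ℕ) : Eset q ρ (i :: w) ⊆ Eset q ρ w :=
  inter_subset_left

lemma Eset_disjoint (w : List ℕ) {i j : ℕ} (hij : i ≠ j) :
    Disjoint (Eset q ρ (i :: w)) (Eset q ρ (j :: w)) := by
  rcases Nat.lt_or_ge i j with h | h
  · rw [disjoint_comm]
    refine disjoint_left.2 fun x hx hx' => ?_
    exact hx.2.2 (mem_iUnion.2 ⟨i, mem_iUnion.2 ⟨h, hx'.2.1⟩⟩)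
  · have h' : j < i := by omega
    refine disjoint_left.2 fun x hx hx' => ?_
    exact hx.2.2 (mem_iUnion.2 ⟨j, mem_iUnion.2 ⟨h', hx'.2.1⟩⟩)

variable [IsFiniteMeasure ρ]

lemma restrict_Eset_image (hqs : Function.Surjective q) :
    ∀ w : List ℕ, ρ.restrict (Eset q ρ w) (q '' cyl w) = ρ (Eset q ρ w) := by
  rintro (_ | ⟨i, w⟩)
  · rw [cyl_nil, image_univ, hqs.range_eq, Eset]
    simp
  · set Ew := Eset q ρ w with hEw
    set lam := ρ.restrict Ew with hlam
    set S := q '' cyl (i :: w) with hS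
    set D : Set V := toMeasurable lam S \ ⋃ j, ⋃ _ : j < i, toMeasurable lam (q '' cyl (j :: w))
      with hD
    have hE' : Eset q ρ (i :: w) = Ew ∩ D := by rw [Eset]
    have hE'meas : MeasurableSet (Eset q ρ (i :: w)) := measurableSet_Eset q ρ _
    set B := toMeasurable (ρ.restrict (Eset q ρ (i :: w))) S with hB
    have hBmeas : MeasurableSet B := measurableSet_toMeasurable _ _
    have hSB : S ⊆ B := subset_toMeasurable _ _
    refine le_antisymm ?_ ?_
    · calc ρ.restrict (Eset q ρ (i :: w)) S ≤ ρ.restrict (Eset q ρ (i :: w)) univ :=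
            measure_mono (subset_univ _)
        _ = ρ (Eset q ρ (i :: w)) := by simp [Measure.restrict_apply_univ]
    · have h1 : ρ.restrict (Eset q ρ (i :: w)) S = ρ (B ∩ Eset q ρ (i :: w)) := by
        rw [← measure_toMeasurable (μ := ρ.restrict (Eset q ρ (i :: w))) S, ← hB,
          Measure.restrict_apply' hE'meas]
      -- `lam (toMeasurable lam S \ B) = 0`
      have hkey : lam (toMeasurable lam S \ B) = 0 := by
        have hHiB : lam (toMeasurable lam S) ≤ lam (toMeasurable lam S ∩ B) := by
          calc lam (toMeasurable lam S) = lam S := measure_toMeasurable S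
            _ ≤ lam (toMeasurable lam S ∩ B) :=
                measure_mono (subset_inter (subset_toMeasurable _ _) hSB)
        have hsum : lam (toMeasurable lam S ∩ B) + lam (toMeasurable lam S \ B)
            = lam (toMeasurable lam S) := measure_inter_add_diff _ hBmeas
        have hle : lam (toMeasurable lam S ∩ B) + lam (toMeasurable lam S \ B)
            ≤ lam (toMeasurable lam S ∩ B) + 0 := by
          rw [add_zero]; exact hsum.le.trans hHiB
        have := (ENNReal.add_le_add_iff_left (measure_ne_top lam _)).1 hle
        simpa using this
      have hnull : ρ (Eset q ρ (i :: w) \ B) = 0 := by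
        have hsub : Eset q ρ (i :: w) \ B ⊆ (toMeasurable lam S \ B) ∩ Ew := by
          rintro x ⟨hx, hxB⟩
          rw [hE'] at hx
          exact ⟨⟨hx.2.1, hxB⟩, hx.1⟩
        refine measure_mono_null hsub ?_
        have : ρ ((toMeasurable lam S \ B) ∩ Ew) = lam (toMeasurable lam S \ B) := by
          rw [hlam, Measure.restrict_apply ((measurableSet_toMeasurable _ _).diff hBmeas)]
        rw [this, hkey]
      calc ρ (Eset q ρ (i :: w)) ≤ ρ (Eset q ρ (i :: w) ∩ B) + ρ (Eset q ρ (i :: w) \ B) :=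
            measure_le_inter_add_diff _ _ _
        _ = ρ (B ∩ Eset q ρ (i :: w)) := by rw [hnull, add_zero, inter_comm]
        _ = ρ.restrict (Eset q ρ (i :: w)) S := h1.symm


lemma Eset_cover (hqs : Function.Surjective q) (w : List ℕ) :
    ρ (Eset q ρ w \ ⋃ i, Eset q ρ (i :: w)) = 0 := by
  classical
  set Ew := Eset q ρ w with hEw
  set lam := ρ.restrict Ew with hlam
  set H : ℕ → Set V := fun j => toMeasurable lam (q '' cyl (j :: w)) with hH
  have hsub : Eset q ρ w \ ⋃ i, Eset q ρ (i :: w) ⊆ Ew \ ⋃ j, H j := by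
    rintro x ⟨hxE, hxn⟩
    refine ⟨hxE, fun hxU => ?_⟩
    rcases mem_iUnion.1 hxU with ⟨j, hj⟩
    have hex : ∃ j, x ∈ H j := ⟨j, hj⟩
    set j₀ := Nat.find hex with hj₀
    refine hxn (mem_iUnion.2 ⟨j₀, ?_⟩)
    rw [show Eset q ρ (j₀ :: w) = Ew ∩ (H j₀ \ ⋃ j, ⋃ _ : j < j₀, H j) from by rw [Eset]]
    refine ⟨hxE, Nat.find_spec hex, fun hmem => ?_⟩
    rcases mem_iUnion.1 hmem with ⟨j', hj'⟩
    rcases mem_iUnion.1 hj' with ⟨hj'lt, hj'mem⟩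
    exact Nat.find_min hex hj'lt hj'mem
  refine measure_mono_null hsub ?_
  have hUmeas : MeasurableSet (⋃ j, H j) :=
    MeasurableSet.iUnion fun j => measurableSet_toMeasurable _ _
  have h1 : ρ (Ew \ ⋃ j, H j) = lam ((⋃ j, H j)ᶜ) := by
    rw [hlam, Measure.restrict_apply hUmeas.compl, compl_eq_univ_diff]
    congr 1
    ext x; simp [mem_diff]; tauto
  rw [h1]
  have h2 : lam (⋃ j, H j) = lam univ := by
    refine le_antisymm (measure_mono (subset_univ _)) ?_
    have h3 : q '' cyl w ⊆ ⋃ j, H j := by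
      rw [cyl_eq_iUnion w, image_iUnion]
      exact iUnion_mono fun j => subset_toMeasurable _ _
    calc lam univ = ρ Ew := by simp [hlam]
      _ = lam (q '' cyl w) := (restrict_Eset_image q ρ hqs w).symm
      _ ≤ lam (⋃ j, H j) := measure_mono h3
  rw [measure_compl hUmeas (measure_ne_top _ _), h2, tsub_self]

lemma Eset_conc [TopologicalSpace V] [OpensMeasurableSpace V]
    (hqs : Function.Surjective q) (w : List ℕ) :
    ρ (Eset q ρ w \ closure (q '' cyl w)) = 0 := by
  set Ew := Eset q ρ w with hEw
  set lam := ρ.restrict Ew with hlam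
  have hCmeas : MeasurableSet (closure (q '' cyl w)) := isClosed_closure.measurableSet
  have h1 : ρ (Ew \ closure (q '' cyl w)) = lam ((closure (q '' cyl w))ᶜ) := by
    rw [hlam, Measure.restrict_apply hCmeas.compl, compl_eq_univ_diff]
    congr 1
    ext x; simp [mem_diff]; tauto
  rw [h1]
  have h2 : lam (closure (q '' cyl w)) = lam univ := by
    refine le_antisymm (measure_mono (subset_univ _)) ?_
    calc lam univ = ρ Ew := by simp [hlam]
      _ = lam (q '' cyl w) := (restrict_Eset_image q ρ hqs w).symm
      _ ≤ lam (closure (q '' cyl w)) := measure_mono subset_closure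
  rw [measure_compl hCmeas (measure_ne_top _ _), h2, tsub_self]


/-- The word of the first `n` digits (reversed) selected for `t`. -/
def word (q : (ℕ → ℕ) → V) (ρ : Measure V) : ℕ → V → List ℕ
  | 0, _ => []
  | n + 1, t => sInf {i | t ∈ Eset q ρ (i :: word q ρ n t)} :: word q ρ n t

lemma word_length (n : ℕ) (t : V) : (word q ρ n t).length = n := by
  induction n with
  | zero => rfl
  | succ n ih => simp [word, ih]

lemma measurableSet_sInf_digit (w' : List ℕ) (i : ℕ) :
    MeasurableSet {t | sInf {j | t ∈ Eset q ρ (j :: w')} = i} := by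
  classical
  have hset : {t | sInf {j | t ∈ Eset q ρ (j :: w')} = i} =
      (Eset q ρ (i :: w') ∩ ⋂ j, ⋂ _ : j < i, (Eset q ρ (j :: w'))ᶜ) ∪
        ({t : V | i = 0} ∩ ⋂ j, (Eset q ρ (j :: w'))ᶜ) := by
    ext t
    simp only [mem_setOf_eq, mem_union, mem_inter_iff, mem_iInter, mem_compl_iff]
    constructor
    · intro h
      by_cases hS : {j | t ∈ Eset q ρ (j :: w')}.Nonempty
      · left
        have hmem := Nat.sInf_mem hS
        rw [h] at hmem
        refine ⟨hmem, fun j hj hjm => ?_⟩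
        have := Nat.notMem_of_lt_sInf (s := {j | t ∈ Eset q ρ (j :: w')}) (by rw [h]; exact hj)
        exact this hjm
      · right
        have hempty : {j | t ∈ Eset q ρ (j :: w')} = ∅ :=
          not_nonempty_iff_eq_empty.1 hS
        rw [hempty, Nat.sInf_empty] at h
        exact ⟨h.symm, fun j hj => hS ⟨j, hj⟩⟩
    · rintro (⟨hmem, hlt⟩ | ⟨hi0, hall⟩)
      · refine le_antisymm (Nat.sInf_le hmem) ?_
        by_contra hcon
        push_neg at hcon
        exact hlt _ hcon (Nat.sInf_mem (⟨i, hmem⟩ : {j | t ∈ Eset q ρ (j :: w')}.Nonempty))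
      · rw [show {j | t ∈ Eset q ρ (j :: w')} = ∅ from
          eq_empty_iff_forall_notMem.2 hall, Nat.sInf_empty]
        exact hi0.symm
  rw [hset]
  refine MeasurableSet.union ?_ ?_
  · exact (measurableSet_Eset q ρ _).inter
      (MeasurableSet.iInter fun j => MeasurableSet.iInter fun _ =>
        (measurableSet_Eset q ρ _).compl)
  · refine MeasurableSet.inter ?_ (MeasurableSet.iInter fun j => (measurableSet_Eset q ρ _).compl)
    by_cases h : i = 0 <;> simp [h]

lemma measurableSet_word (n : ℕ) (w : List ℕ) :
    MeasurableSet {t | word q ρ n t = w} := by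
  induction n generalizing w with
  | zero =>
    rcases w with _ | ⟨i, w'⟩
    · simp only [word]; exact MeasurableSet.univ
    · convert MeasurableSet.empty
      ext t; simp [word]
  | succ n ih =>
    rcases w with _ | ⟨i, w'⟩
    · convert MeasurableSet.empty
      ext t; simp [word]
    · have hset : {t | word q ρ (n + 1) t = i :: w'} =
          {t | word q ρ n t = w'} ∩ {t | sInf {j | t ∈ Eset q ρ (j :: w')} = i} := by
        ext t
        simp only [word, mem_setOf_eq, mem_inter_iff, List.cons.injEq]
        constructor
        · rintro ⟨h1, h2⟩
          rw [h2] at h1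
          exact ⟨h2, h1⟩
        · rintro ⟨h2, h1⟩
          rw [h2]
          exact ⟨h1, rfl⟩
      rw [hset]
      exact (ih w').inter (measurableSet_sInf_digit q ρ w' i)

/-- The selected branch for `t`. -/
def sec (q : (ℕ → ℕ) → V) (ρ : Measure V) (t : V) : ℕ → ℕ :=
  fun n => (word q ρ (n + 1) t).headD 0

lemma word_succ (n : ℕ) (t : V) :
    word q ρ (n + 1) t = sec q ρ t n :: word q ρ n t := rfl

lemma measurable_sec : Measurable (sec q ρ) := by
  refine measurable_pi_lambda _ fun n => ?_
  refine measurable_to_countable' fun i => ?_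
  have : (fun t => sec q ρ t n) ⁻¹' {i} =
      ⋃ w : List ℕ, ⋃ _ : w.headD 0 = i, {t | word q ρ (n + 1) t = w} := by
    ext t
    simp only [sec, mem_preimage, mem_singleton_iff, mem_iUnion, mem_setOf_eq]
    constructor
    · intro h; exact ⟨word q ρ (n + 1) t, h, rfl⟩
    · rintro ⟨w, hw, hww⟩; rw [hww]; exact hw
  rw [this]
  exact MeasurableSet.iUnion fun w => MeasurableSet.iUnion fun _ => measurableSet_word q ρ _ _

lemma cyl_word_eq (t : V) (n : ℕ) :
    cyl (word q ρ n t) = {β | ∀ k < n, β k = sec q ρ t k} := by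
  induction n with
  | zero => rw [show word q ρ 0 t = [] from rfl, cyl_nil]; ext β; simp
  | succ n ih =>
    rw [word_succ, cyl_cons, ih, word_length]
    ext β
    simp only [mem_inter_iff, mem_setOf_eq]
    constructor
    · rintro ⟨h1, h2⟩ k hk
      rcases Nat.lt_or_ge k n with h | h
      · exact h1 k h
      · have : k = n := by omega
        rw [this]; exact h2
    · intro h
      exact ⟨fun k hk => h k (by omega), h n (by omega)⟩

lemma sec_mem_cyl (t : V) (n : ℕ) : sec q ρ t ∈ cyl (word q ρ n t) := by
  rw [cyl_word_eq]
  intro k _; rfl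


lemma exists_cyl_subset_of_mem_nhds {α : ℕ → ℕ} {s : Set (ℕ → ℕ)} (hs : s ∈ nhds α) :
    ∃ n : ℕ, {β : ℕ → ℕ | ∀ k < n, β k = α k} ⊆ s := by
  rw [nhds_pi] at hs
  rcases Filter.mem_pi.1 hs with ⟨I, hIf, ts, hts, hsub⟩
  rcases hIf.bddAbove with ⟨n₀, hn₀⟩
  refine ⟨n₀ + 1, fun β hβ => ?_⟩
  refine hsub fun k hk => ?_
  have hkn : k < n₀ + 1 := Nat.lt_succ_of_le (hn₀ hk)
  rw [hβ k hkn]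
  have := hts k
  rwa [nhds_discrete, Filter.mem_pure] at this

theorem exists_measurable_section [TopologicalSpace V] [T2Space V] [OpensMeasurableSpace V]
    (hq : Continuous q) (hqs : Function.Surjective q) :
    ∃ s : V → (ℕ → ℕ), Measurable s ∧ ∀ᵐ t ∂ρ, q (s t) = t := by
  classical
  refine ⟨sec q ρ, measurable_sec q ρ, ?_⟩
  set Bad1 : Set V := ⋃ w : List ℕ, (Eset q ρ w \ ⋃ i, Eset q ρ (i :: w)) with hBad1
  set Bad2 : Set V := ⋃ w : List ℕ, (Eset q ρ w \ closure (q '' cyl w)) with hBad2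
  have hBad1null : ρ Bad1 = 0 := measure_iUnion_null fun w => Eset_cover q ρ hqs w
  have hBad2null : ρ Bad2 = 0 := measure_iUnion_null fun w => Eset_conc q ρ hqs w
  have hgood : ∀ t, t ∉ Bad1 → t ∉ Bad2 → q (sec q ρ t) = t := by
    intro t ht1 ht2
    have hmem : ∀ n, t ∈ Eset q ρ (word q ρ n t) := by
      intro n
      induction n with
      | zero => exact mem_univ t
      | succ n ih =>
        have hnot : t ∉ Eset q ρ (word q ρ n t) \ ⋃ i, Eset q ρ (i :: word q ρ n t) :=
          fun hc => ht1 (mem_iUnion.2 ⟨word q ρ n t, hc⟩)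
        have hU : t ∈ ⋃ i, Eset q ρ (i :: word q ρ n t) := by
          by_contra hc
          exact hnot ⟨ih, hc⟩
        rcases mem_iUnion.1 hU with ⟨i, hi⟩
        have hne : {j | t ∈ Eset q ρ (j :: word q ρ n t)}.Nonempty := ⟨i, hi⟩
        have := Nat.sInf_mem hne
        exact this
    have hcl : ∀ n, t ∈ closure (q '' cyl (word q ρ n t)) := by
      intro n
      by_contra hc
      exact ht2 (mem_iUnion.2 ⟨word q ρ n t, hmem n, hc⟩)
    by_contra hne
    rcases t2_separation hne with ⟨U, W, hUo, hWo, hqU, htW, hUW⟩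
    have hpre : q ⁻¹' U ∈ nhds (sec q ρ t) :=
      hq.continuousAt.preimage_mem_nhds (hUo.mem_nhds hqU)
    rcases exists_cyl_subset_of_mem_nhds hpre with ⟨n, hn⟩
    have himg : q '' cyl (word q ρ n t) ⊆ U := by
      rw [image_subset_iff, cyl_word_eq]
      exact hn
    have htcl : t ∈ closure U := closure_mono himg (hcl n)
    have : t ∉ closure U := by
      have hUWc : U ⊆ Wᶜ := fun x hx hx' => (disjoint_left.1 hUW) hx hx'
      have : closure U ⊆ Wᶜ := closure_minimal hUWc hWo.isClosed_compl
      exact fun hc => this hc htW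
    exact this htcl
  have : {t | ¬ q (sec q ρ t) = t} ⊆ Bad1 ∪ Bad2 := by
    intro t ht
    by_contra hc
    rw [mem_union] at hc
    push_neg at hc
    exact ht (hgood t hc.1 hc.2)
  exact measure_mono_null this (measure_union_null hBad1null hBad2null)


lemma isSouslin_prod {X Y : Type*} [TopologicalSpace X] [TopologicalSpace Y]
    (hX : IsSouslin X) (hY : IsSouslin Y) : IsSouslin (X × Y) := by
  obtain ⟨Z1, m1, h1⟩ := hX
  obtain ⟨Z2, m2, h2⟩ := hY
  letI := m1; letI := m2
  obtain ⟨h1c, h1s, f1, hf1c, hf1s⟩ := h1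
  obtain ⟨h2c, h2s, f2, hf2c, hf2s⟩ := h2
  haveI := h1c; haveI := h2c; haveI := h1s; haveI := h2s
  exact ⟨Z1 × Z2, inferInstance, inferInstance, inferInstance, Prod.map f1 f2,
    hf1c.prodMap hf2c, hf1s.prodMap hf2s⟩

lemma isSouslin_separable {X : Type*} [TopologicalSpace X] (hX : IsSouslin X) :
    TopologicalSpace.SeparableSpace X := by
  obtain ⟨Z, m, h⟩ := hX
  letI := m
  obtain ⟨hc, hs, f, hfc, hfs⟩ := h
  haveI := hs
  exact hfs.denseRange.separableSpace hfc

end CPSAux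

/-- Lemma 3(ii): for metrizable Souslin spaces `X, Y, Z`, a countable family `B` of
conditioning events of `X`, and a Borel measurable surjection `f₁ : Y → Z`, the
pushforward-CPS map `L̄_{f₂} : Δ^B(X × Y) → Δ^B(X × Z)` induced by `f₂ := (Id_X, f₁)`
is surjective. -/
theorem prod_push_surjective {X Y Z : Type*}
    [TopologicalSpace X] [MeasurableSpace X] [BorelSpace X] [TopologicalSpace.MetrizableSpace X]
    [TopologicalSpace Y] [MeasurableSpace Y] [BorelSpace Y] [TopologicalSpace.MetrizableSpace Y]
    [TopologicalSpace Z] [MeasurableSpace Z] [BorelSpace Z] [TopologicalSpace.MetrizableSpace Z]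
    [MeasurableSpace (X × Y)] [BorelSpace (X × Y)]
    [MeasurableSpace (X × Z)] [BorelSpace (X × Z)]
    (hX : IsSouslin X) (hY : IsSouslin Y) (hZ : IsSouslin Z)
    {B : Set (Set X)} (hB : IsCondFamily B) (hBc : B.Countable)
    (f₁ : Y → Z) (hf₁ : Measurable f₁) (hf₁surj : Function.Surjective f₁) :
    ∀ (hf₂ : Measurable (fun p : X × Y => (p.1, f₁ p.2)))
      (hcyl : cylFam B Y = (fun E => (fun p : X × Y => (p.1, f₁ p.2)) ⁻¹' E) '' cylFam B Z)
      (ν : cylFam B Z → ProbabilityMeasure (X × Z)), IsCPS (cylFam B Z) ν →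
      ∃ μ : cylFam B Y → ProbabilityMeasure (X × Y),
        IsCPS (cylFam B Y) μ ∧ pushArray _ hf₂ hcyl μ = ν := by
  classical
  intro hf₂ hcyl ν hν
  set F : X × Y → X × Z := fun p => (p.1, f₁ p.2) with hF
  obtain ⟨b₀set, hb₀B⟩ := hB.1
  have hb₀ : b₀set ×ˢ (univ : Set Z) ∈ cylFam B Z := mem_image_of_mem _ hb₀B
  haveI : Nonempty (X × Z) := by
    by_contra h
    rw [not_nonempty_iff] at h
    have h1 : (ν ⟨_, hb₀⟩ : Measure (X × Z)) univ = 1 := (ν ⟨_, hb₀⟩).2.measure_univ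
    rw [univ_eq_empty_iff.2 h, measure_empty] at h1
    exact zero_ne_one h1
  haveI : Nonempty (X × Y) := by
    rcases ‹Nonempty (X × Z)› with ⟨⟨x, z⟩⟩
    obtain ⟨y, _⟩ := hf₁surj z
    exact ⟨(x, y)⟩
  have hFsurj : Function.Surjective F := by
    rintro ⟨x, z⟩
    obtain ⟨y, hy⟩ := hf₁surj z
    exact ⟨(x, y), by simp [hF, hy]⟩
  haveI := CPSAux.isSouslin_separable hX
  haveI := CPSAux.isSouslin_separable hZ
  haveI : SecondCountableTopology X := by
    letI := TopologicalSpace.metrizableSpaceMetric X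
    exact UniformSpace.secondCountable_of_separable X
  haveI : SecondCountableTopology Z := by
    letI := TopologicalSpace.metrizableSpaceMetric Z
    exact UniformSpace.secondCountable_of_separable Z
  obtain ⟨P, mP, hP⟩ := CPSAux.isSouslin_prod hX hY
  letI := mP
  obtain ⟨hPc, hPs, φ, hφc, hφs⟩ := hP
  haveI := hPc; haveI := hPs
  haveI : SecondCountableTopology P := UniformSpace.secondCountable_of_separable P
  letI : MeasurableSpace P := borel P
  haveI : BorelSpace P := ⟨rfl⟩
  haveI : Nonempty P := by
    rcases ‹Nonempty (X × Y)› with ⟨w⟩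
    exact ⟨(hφs w).choose⟩
  have hh : Measurable (F ∘ φ) := hf₂.comp hφc.measurable
  obtain ⟨t', ht'le, hcont', hpolish'⟩ := hh.exists_continuous
  obtain ⟨u, hu_cont, hu_surj⟩ := @PolishSpace.exists_nat_nat_continuous_surjective P t' hpolish' ‹Nonempty P›
  have hqc0 : Continuous ((F ∘ φ) ∘ u) := by
    refine continuous_def.2 fun s hs => ?_
    have h1 : @IsOpen P t' ((F ∘ φ) ⁻¹' s) := hcont'.isOpen_preimage s hs
    rw [preimage_comp]
    exact hu_cont.isOpen_preimage _ h1
  have hu_cont_t : @Continuous (ℕ → ℕ) P Pi.topologicalSpace UniformSpace.toTopologicalSpace u := by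
    refine continuous_def.2 fun s hs => ?_
    exact hu_cont.isOpen_preimage s (ht'le s hs)
  clear hu_cont hcont' hpolish' ht'le
  clear t'
  set r : (ℕ → ℕ) → X × Y := φ ∘ u with hr
  have hrc : Continuous r := hφc.comp hu_cont_t
  have hrm : Measurable r := hrc.measurable
  set q : (ℕ → ℕ) → X × Z := (F ∘ φ) ∘ u with hq
  have hqc : Continuous q := hqc0
  have hqs : Function.Surjective q := (hFsurj.comp hφs).comp hu_surj
  haveI : Countable ↥(cylFam B Z) := (hBc.image _).to_subtype
  haveI : Nonempty ↥(cylFam B Z) := ⟨⟨_, hb₀⟩⟩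
  obtain ⟨e, he⟩ := exists_surjective_nat (↥(cylFam B Z))
  set ρ : Measure (X × Z) :=
    Measure.sum (fun n => (2 : ENNReal)⁻¹ ^ n • (ν (e n) : Measure (X × Z))) with hρ
  haveI : IsFiniteMeasure ρ := by
    constructor
    rw [hρ, Measure.sum_apply _ MeasurableSet.univ]
    have hle : ∑' n, ((2 : ENNReal)⁻¹ ^ n • (ν (e n) : Measure (X × Z))) univ
        ≤ ∑' n : ℕ, (2 : ENNReal)⁻¹ ^ n := by
      refine ENNReal.tsum_le_tsum fun n => ?_
      rw [Measure.smul_apply, smul_eq_mul, measure_univ, mul_one]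
    refine lt_of_le_of_lt hle ?_
    rw [ENNReal.tsum_geometric, ENNReal.one_sub_inv_two, inv_inv]
    exact ENNReal.ofNat_lt_top
  have habs : ∀ (b : ↥(cylFam B Z)) (N : Set (X × Z)), ρ N = 0 →
      (ν b : Measure (X × Z)) N = 0 := by
    intro b N hN
    obtain ⟨n, rfl⟩ := he b
    have hN' : ρ (toMeasurable ρ N) = 0 := by rwa [measure_toMeasurable]
    rw [hρ, Measure.sum_apply _ (measurableSet_toMeasurable _ _)] at hN'
    have h0 := (ENNReal.tsum_eq_zero.1 hN') n
    rw [Measure.smul_apply, smul_eq_mul, mul_eq_zero] at h0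
    have hc2 : (2 : ENNReal)⁻¹ ^ n ≠ 0 := by
      apply pow_ne_zero; simp
    exact measure_mono_null (subset_toMeasurable ρ N) (h0.resolve_left hc2)
  obtain ⟨s, hsm, hsae⟩ := CPSAux.exists_measurable_section q ρ hqc hqs
  set g : X × Z → X × Y := r ∘ s with hg
  have hgm : Measurable g := hrm.comp hsm
  have hFg : ∀ b : ↥(cylFam B Z), (ν b : Measure (X × Z)) {v | ¬ F (g v) = v} = 0 := by
    intro b
    exact habs b _ (ae_iff.1 hsae)
  have hmeasY : ∀ c : ↥(cylFam B Y), MeasurableSet (c : Set (X × Y)) := by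
    intro c
    obtain ⟨bset, hbB, hEq⟩ := c.2
    have hps : (c : Set (X × Y)) = Prod.fst ⁻¹' bset := by
      rw [← hEq]; ext p; simp [Set.mem_prod]
    rw [hps]
    exact continuous_fst.measurable (hB.2.2 bset hbB)
  have hmeasZ : ∀ b : ↥(cylFam B Z), MeasurableSet (b : Set (X × Z)) := by
    intro b
    obtain ⟨bset, hbB, hEq⟩ := b.2
    have hps : (b : Set (X × Z)) = Prod.fst ⁻¹' bset := by
      rw [← hEq]; ext p; simp [Set.mem_prod]
    rw [hps]
    exact continuous_fst.measurable (hB.2.2 bset hbB)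
  have hselex : ∀ c : ↥(cylFam B Y), ∃ b : ↥(cylFam B Z),
      F ⁻¹' (b : Set (X × Z)) = (c : Set (X × Y)) := by
    rintro ⟨c, hc⟩
    rw [hcyl] at hc
    obtain ⟨E, hE, hEeq⟩ := hc
    exact ⟨⟨E, hE⟩, hEeq⟩
  choose sel hsel using hselex
  have hmapg : ∀ b : ↥(cylFam B Z),
      ((ν b : Measure (X × Z)).map g).map F = (ν b : Measure (X × Z)) := by
    intro b
    rw [Measure.map_map hf₂ hgm]
    have hae : (F ∘ g) =ᵐ[(ν b : Measure (X × Z))] id := ae_iff.2 (hFg b)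
    calc (ν b : Measure (X × Z)).map (F ∘ g) = (ν b : Measure (X × Z)).map id :=
          Measure.map_congr hae
      _ = (ν b : Measure (X × Z)) := Measure.map_id
  have hpre : ∀ (b : ↥(cylFam B Z)) (E : Set (X × Z)), MeasurableSet E →
      (ν b : Measure (X × Z)) (g ⁻¹' (F ⁻¹' E)) = (ν b : Measure (X × Z)) E := by
    intro b E hE
    conv_rhs => rw [← hmapg b]
    rw [Measure.map_apply hf₂ hE, Measure.map_apply hgm (hf₂ hE)]
  have hprob : ∀ c : ↥(cylFam B Y),
      IsProbabilityMeasure ((ν (sel c) : Measure (X × Z)).map g) := fun c =>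
    Measure.isProbabilityMeasure_map hgm.aemeasurable
  set μ : ↥(cylFam B Y) → ProbabilityMeasure (X × Y) :=
    fun c => ⟨(ν (sel c) : Measure (X × Z)).map g, hprob c⟩ with hμ
  have hμapply : ∀ (c : ↥(cylFam B Y)) (A : Set (X × Y)), MeasurableSet A →
      (μ c : Measure (X × Y)) A = (ν (sel c) : Measure (X × Z)) (g ⁻¹' A) := by
    intro c A hA
    rw [hμ]
    exact Measure.map_apply hgm hA
  have hinter : ∀ (b b' : ↥(cylFam B Z)) (A : Set (X × Y)), A ⊆ F ⁻¹' (b : Set (X × Z)) →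
      (ν b' : Measure (X × Z)) (g ⁻¹' A ∩ (b : Set (X × Z)))
        = (ν b' : Measure (X × Z)) (g ⁻¹' A) := by
    intro b b' A hAb
    refine le_antisymm (measure_mono inter_subset_left) ?_
    have hsub : g ⁻¹' A ⊆ (g ⁻¹' A ∩ (b : Set (X × Z))) ∪ {v | ¬ F (g v) = v} := by
      intro v hv
      by_cases hvb : F (g v) = v
      · left
        refine ⟨hv, ?_⟩
        have hFv : F (g v) ∈ (b : Set (X × Z)) := hAb hv
        rwa [hvb] at hFv
      · right; exact hvb
    calc (ν b' : Measure (X × Z)) (g ⁻¹' A) ≤ _ := measure_mono hsub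
      _ ≤ (ν b' : Measure (X × Z)) (g ⁻¹' A ∩ (b : Set (X × Z)))
          + (ν b' : Measure (X × Z)) {v | ¬ F (g v) = v} := measure_union_le _ _
      _ = (ν b' : Measure (X × Z)) (g ⁻¹' A ∩ (b : Set (X × Z))) := by
          rw [hFg b', add_zero]
  refine ⟨μ, ⟨?_, ?_⟩, ?_⟩
  · intro c
    rw [hμapply c _ (hmeasY c)]
    have h1 : (c : Set (X × Y)) = F ⁻¹' (sel c : Set (X × Z)) := (hsel c).symm
    rw [h1, hpre (sel c) _ (hmeasZ (sel c))]
    exact hν.1 (sel c)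
  · intro A hA c c' hAc hcc'
    have hbsub : (sel c : Set (X × Z)) ⊆ (sel c' : Set (X × Z)) := by
      have h1 : F ⁻¹' (sel c : Set (X × Z)) ⊆ F ⁻¹' (sel c' : Set (X × Z)) := by
        rw [hsel c, hsel c']; exact hcc'
      exact (preimage_subset_preimage_iff
        (by rw [Set.range_eq_univ.2 hFsurj]; exact subset_univ _)).1 h1
    have hAF : A ⊆ F ⁻¹' (sel c : Set (X × Z)) := by rw [hsel c]; exact hAc
    have hA'm : MeasurableSet (g ⁻¹' A ∩ (sel c : Set (X × Z))) :=
      (hgm hA).inter (hmeasZ (sel c))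
    have hchain := hν.2 (g ⁻¹' A ∩ (sel c : Set (X × Z))) hA'm (sel c) (sel c')
      inter_subset_right hbsub
    rw [hμapply c A hA, hμapply c' _ (hmeasY c), hμapply c' A hA]
    have h2 : (ν (sel c') : Measure (X × Z)) (g ⁻¹' (c : Set (X × Y)))
        = (ν (sel c') : Measure (X × Z)) (sel c : Set (X × Z)) := by
      conv_lhs => rw [← hsel c]
      exact hpre (sel c') _ (hmeasZ (sel c))
    rw [h2, ← hinter (sel c) (sel c) A hAF, ← hinter (sel c) (sel c') A hAF]
    exact hchain
  · funext b
    apply Subtype.ext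
    have hpf : F ⁻¹' (b : Set (X × Z)) ∈ cylFam B Y := by
      rw [hcyl]; exact mem_image_of_mem _ b.2
    have hselb : sel ⟨F ⁻¹' (b : Set (X × Z)), hpf⟩ = b := by
      apply Subtype.ext
      apply hFsurj.preimage_injective
      rw [hsel]
    calc ((μ ⟨F ⁻¹' (b : Set (X × Z)), hpf⟩ : ProbabilityMeasure (X × Y)) :
          Measure (X × Y)).map F
        = ((ν (sel ⟨F ⁻¹' (b : Set (X × Z)), hpf⟩) : Measure (X × Z)).map g).map F := rfl
      _ = ((ν b : Measure (X × Z)).map g).map F := by rw [hselb]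
      _ = (ν b : Measure (X × Z)) := hmapg b

end
end
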